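/- Let Z be a real-valued random variable taking finitely many values, and let a > 0. If E[Z] − Z ≤ a/2 almost surely, then E[exp(2(E[Z] − Z))] − 1 ≤ 4 · ((e^a − a − 1)/a²) · Var(Z). -/

import Mathlib

open MeasureTheory

private lemma summable_fac (x : ℝ) : Summable (fun n : ℕ => x ^ n / (n.factorial : ℝ)) :=
  Real.summable_pow_div_factorial x

private lemma exp_tsum_expand (x : ℝ) :
    Real.exp x - 1 - x = ∑' n : ℕ, x ^ (n + 2) / ((n + 2).factorial : ℝ) := by
  have h : Real.exp x = ∑' n : ℕ, x ^ n / (n.factorial : ℝ) := by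
    rw [Real.exp_eq_exp_ℝ, NormedSpace.exp_eq_tsum_div]
  have hs := summable_fac x
  have h0 := Summable.tsum_eq_zero_add hs
  have h1 := Summable.tsum_eq_zero_add (hs.comp_injective (add_left_injective 1))
  simp only [Function.comp] at h1
  rw [h, h0, h1]
  have : ∀ n : ℕ, n + 1 + 1 = n + 2 := fun n => by ring
  simp only [this]
  simp [Nat.factorial]

private lemma key_ineq {a y : ℝ} (ha : 0 < a) (hy : y ≤ a) :
    Real.exp y - 1 ≤ y + (Real.exp a - a - 1) / a ^ 2 * y ^ 2 := by
  have ha2 : a ^ 2 / 2 ≤ Real.exp a - a - 1 := by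
    rw [show Real.exp a - a - 1 = Real.exp a - 1 - a by ring, exp_tsum_expand a]
    have h1 := Summable.tsum_eq_zero_add
      ((summable_fac a).comp_injective (add_left_injective 2) :
        Summable (fun n : ℕ => a ^ (n + 2) / ((n + 2).factorial : ℝ)))
    simp only [Function.comp] at h1
    have hnn : 0 ≤ ∑' n : ℕ, a ^ (n + 1 + 2) / (((n + 1 + 2).factorial : ℕ) : ℝ) :=
      tsum_nonneg fun n => by positivity
    rw [h1]
    have he : a ^ (0 + 2) / (((0 + 2).factorial : ℕ) : ℝ) = a ^ 2 / 2 := by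
      norm_num [Nat.factorial]
    linarith
  rcases le_or_gt y 0 with hy0 | hy0
  · -- exp y ≤ 1 + y + y^2/2 for y ≤ 0
    have hq : Real.exp y ≤ 1 + y + y ^ 2 / 2 := by
      have hanti : AntitoneOn (fun t : ℝ => 1 + t + t ^ 2 / 2 - Real.exp t) (Set.Iic (0:ℝ)) := by
        apply antitoneOn_of_deriv_nonpos (convex_Iic _)
        · exact (Continuous.continuousOn (by continuity))
        · intro t ht
          exact (((differentiable_id.const_add _).add
            ((differentiable_pow 2).div_const 2)).sub Real.differentiable_exp).differentiableAt.differentiableWithinAt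
        · intro t ht
          have hd : HasDerivAt (fun t : ℝ => 1 + t + t ^ 2 / 2 - Real.exp t)
              (0 + 1 + 2 * t ^ 1 / 2 - Real.exp t) t :=
            (((hasDerivAt_const t 1).add (hasDerivAt_id t)).add
              (((hasDerivAt_pow 2 t)).div_const 2)).sub (Real.hasDerivAt_exp t)
          rw [(by rw [hd.deriv]; ring :
            deriv (fun t : ℝ => 1 + t + t ^ 2 / 2 - Real.exp t) t = 1 + t - Real.exp t)]
          linarith [Real.add_one_le_exp t]
      have h0 : (fun t : ℝ => 1 + t + t ^ 2 / 2 - Real.exp t) 0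
          ≤ (fun t : ℝ => 1 + t + t ^ 2 / 2 - Real.exp t) y :=
        hanti (Set.mem_Iic.2 hy0) (Set.mem_Iic.2 le_rfl) hy0
      simp only [Real.exp_zero] at h0
      norm_num at h0
      linarith
    have hc : (1:ℝ)/2 ≤ (Real.exp a - a - 1) / a ^ 2 := by
      rw [le_div_iff₀ (by positivity)]
      nlinarith
    nlinarith [sq_nonneg y]
  · -- 0 < y ≤ a : series comparison
    have hkey : a ^ 2 * (Real.exp y - 1 - y) ≤ y ^ 2 * (Real.exp a - a - 1) := by
      rw [show Real.exp a - a - 1 = Real.exp a - 1 - a by ring,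
        exp_tsum_expand y, exp_tsum_expand a]
      have hsy : Summable (fun n : ℕ => a ^ 2 * (y ^ (n + 2) / ((n + 2).factorial : ℝ))) :=
        (((summable_fac y).comp_injective (add_left_injective 2)) :
          Summable (fun n : ℕ => y ^ (n + 2) / ((n + 2).factorial : ℝ))).mul_left _
      have hsa : Summable (fun n : ℕ => y ^ 2 * (a ^ (n + 2) / ((n + 2).factorial : ℝ))) :=
        (((summable_fac a).comp_injective (add_left_injective 2)) :
          Summable (fun n : ℕ => a ^ (n + 2) / ((n + 2).factorial : ℝ))).mul_left _
      rw [← tsum_mul_left, ← tsum_mul_left]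
      refine Summable.tsum_le_tsum (fun n => ?_) hsy hsa
      have hf : (0:ℝ) < ((n + 2).factorial : ℝ) := by positivity
      rw [mul_div_assoc', mul_div_assoc', div_le_div_iff₀ hf hf]
      have h2 : a ^ 2 * y ^ (n + 2) ≤ y ^ 2 * a ^ (n + 2) := by
        have hyn : y ^ n ≤ a ^ n := pow_le_pow_left₀ hy0.le hy n
        calc a ^ 2 * y ^ (n + 2) = (a ^ 2 * y ^ 2) * y ^ n := by ring
          _ ≤ (a ^ 2 * y ^ 2) * a ^ n := mul_le_mul_of_nonneg_left hyn (by positivity)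
          _ = y ^ 2 * a ^ (n + 2) := by ring
      nlinarith
    have h3 : Real.exp y - 1 - y ≤ (Real.exp a - a - 1) / a ^ 2 * y ^ 2 := by
      rw [div_mul_eq_mul_div, le_div_iff₀ (by positivity : (0:ℝ) < a ^ 2)]
      nlinarith
    linarith

open ProbabilityTheory in
/-- **A Bernstein-type exponential-moment inequality.**
If `Z` is a real random variable taking finitely many values and
`E[Z] − Z ≤ a/2` almost surely for some `a > 0`, then
`E[exp(2(E[Z] − Z))] − 1 ≤ 4 ((e^a − a − 1)/a²) Var(Z)`. -/
theorem stmt_6 {Ω : Type*} [MeasurableSpace Ω] (μ : Measure Ω) [IsProbabilityMeasure μ]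
    (Z : Ω → ℝ) (hZmeas : Measurable Z) (hZfin : (Set.range Z).Finite)
    (a : ℝ) (ha : 0 < a)
    (hbd : ∀ᵐ ω ∂μ, (∫ ω', Z ω' ∂μ) - Z ω ≤ a / 2) :
    (∫ ω, Real.exp (2 * ((∫ ω', Z ω' ∂μ) - Z ω)) ∂μ) - 1
      ≤ 4 * ((Real.exp a - a - 1) / a ^ 2) * ProbabilityTheory.variance Z μ := by
  set m := ∫ ω', Z ω' ∂μ with hm
  set c := (Real.exp a - a - 1) / a ^ 2 with hc
  -- boundedness of Z
  obtain ⟨C, hC⟩ : ∃ C, ∀ ω, |Z ω| ≤ C := by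
    have hfin : ((fun x => |x|) '' Set.range Z).Finite := hZfin.image _
    obtain ⟨C, hCmem⟩ := hfin.bddAbove
    exact ⟨C, fun ω => hCmem ⟨Z ω, Set.mem_range_self ω, rfl⟩⟩
  have hZint : Integrable Z μ :=
    (memLp_top_of_bound hZmeas.aestronglyMeasurable C
      (ae_of_all _ fun ω => by simpa using hC ω)).integrable le_top
  have hZ2 : MemLp Z 2 μ :=
    (memLp_top_of_bound hZmeas.aestronglyMeasurable C
      (ae_of_all _ fun ω => by simpa using hC ω)).mono_exponent le_top
  -- integrability of the exponential (bounded by exp a a.e.? no: exp(2(m-Z)) ≤ exp(2|m|+2C))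
  have hexpbd : ∀ ω, ‖Real.exp (2 * (m - Z ω))‖ ≤ Real.exp (2 * |m| + 2 * C) := by
    intro ω
    rw [Real.norm_eq_abs, abs_of_pos (Real.exp_pos _)]
    apply Real.exp_le_exp.2
    have := hC ω
    have := abs_le.1 (hC ω)
    have := abs_le.1 (le_refl |m|) -- dummy
    nlinarith [neg_abs_le m, le_abs_self m, (abs_le.1 (hC ω)).1, (abs_le.1 (hC ω)).2]
  have hexpmeas : Measurable fun ω => Real.exp (2 * (m - Z ω)) :=
    (Real.measurable_exp.comp ((measurable_const.sub hZmeas).const_mul 2))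
  have hexpint : Integrable (fun ω => Real.exp (2 * (m - Z ω))) μ :=
    (memLp_top_of_bound hexpmeas.aestronglyMeasurable _
      (ae_of_all _ hexpbd)).integrable le_top
  have hsqint : Integrable (fun ω => (m - Z ω) ^ 2) μ := by
    have := (hZ2.sub (memLp_const m)).integrable_sq
    apply this.congr
    · filter_upwards with ω
      simp [sub_sq]
      ring
  -- pointwise bound a.e.
  have hpt : ∀ᵐ ω ∂μ, Real.exp (2 * (m - Z ω)) - 1
      ≤ 2 * (m - Z ω) + c * (2 * (m - Z ω)) ^ 2 := by
    filter_upwards [hbd] with ω hω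
    exact key_ineq ha (by linarith)
  -- integrate
  have hmono : ∫ ω, (Real.exp (2 * (m - Z ω)) - 1) ∂μ
      ≤ ∫ ω, (2 * (m - Z ω) + c * (2 * (m - Z ω)) ^ 2) ∂μ := by
    refine integral_mono_ae (hexpint.sub (integrable_const 1)) ?_ hpt
    have h2 : Integrable (fun ω => c * (2 * (m - Z ω)) ^ 2) μ := by
      have h3 : Integrable (fun ω => (4 * c) * (m - Z ω) ^ 2) μ := hsqint.const_mul _
      apply h3.congr
      filter_upwards with ω; ring
    have h1 : Integrable (fun ω => 2 * (m - Z ω)) μ :=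
      (((integrable_const m).sub hZint).const_mul 2 : _)
    exact h1.add h2
  have hE1 : ∫ ω, (Real.exp (2 * (m - Z ω)) - 1) ∂μ
      = (∫ ω, Real.exp (2 * (m - Z ω)) ∂μ) - 1 := by
    rw [integral_sub hexpint (integrable_const 1)]
    simp
  have hE2 : ∫ ω, (2 * (m - Z ω)) ∂μ = 0 := by
    rw [integral_const_mul, integral_sub (integrable_const m) hZint]
    simp [hm]
  have hvar : ProbabilityTheory.variance Z μ = ∫ ω, (m - Z ω) ^ 2 ∂μ := by
    rw [ProbabilityTheory.variance_eq_integral hZmeas.aemeasurable]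
    congr 1
    ext ω
    simp [hm]
    ring
  have hE3 : ∫ ω, (2 * (m - Z ω) + c * (2 * (m - Z ω)) ^ 2) ∂μ
      = 4 * c * ProbabilityTheory.variance Z μ := by
    have hi2 : Integrable (fun ω => c * (2 * (m - Z ω)) ^ 2) μ := by
      have : Integrable (fun ω => (4 * c) * (m - Z ω) ^ 2) μ := hsqint.const_mul _
      apply this.congr
      filter_upwards with ω; ring
    have h1 : Integrable (fun ω => 2 * (m - Z ω)) μ :=
      (((integrable_const m).sub hZint).const_mul 2 : _)
    rw [integral_add h1 hi2, hE2, zero_add]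
    have : (fun ω => c * (2 * (m - Z ω)) ^ 2) = fun ω => (4 * c) * (m - Z ω) ^ 2 := by
      ext ω; ring
    rw [this, integral_const_mul, hvar]
  calc (∫ ω, Real.exp (2 * (m - Z ω)) ∂μ) - 1
      = ∫ ω, (Real.exp (2 * (m - Z ω)) - 1) ∂μ := hE1.symm
    _ ≤ ∫ ω, (2 * (m - Z ω) + c * (2 * (m - Z ω)) ^ 2) ∂μ := hmono
    _ = 4 * c * ProbabilityTheory.variance Z μ := hE3
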